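/- Let a, b ≥ 0 be real numbers, set c = (a+b+1)/2, and let n ≥ 2 be an integer. If for all nonnegative real numbers x₁, …, xₙ (with x_{n+1} = x₁ cyclically) one has (Σᵢ₌₁ⁿ xᵢ^c)² ≥ (Σᵢ₌₁ⁿ xᵢ)(Σᵢ₌₁ⁿ xᵢ^a x_{i+1}^b), then the same inequality holds for n − 1 variables: for all nonnegative y₁, …, y_{n−1} (with y_n = y₁ cyclically), (Σᵢ₌₁^{n−1} yᵢ^c)² ≥ (Σᵢ₌₁^{n−1} yᵢ)(Σᵢ₌₁^{n−1} yᵢ^a y_{i+1}^b). -/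
import Mathlib

set_option maxHeartbeats 1000000

theorem cyclic_ineq_descend (a b c : ℝ) (ha : 0 ≤ a) (hb : 0 ≤ b)
    (hc : c = (a + b + 1) / 2) (n : ℕ) (hn : 2 ≤ n)
    (h : ∀ x : ℕ → ℝ, (∀ i, 0 ≤ x i) →
      (∑ i ∈ Finset.range n, x i ^ c) ^ 2 ≥
        (∑ i ∈ Finset.range n, x i) *
          (∑ i ∈ Finset.range n, x i ^ a * x ((i + 1) % n) ^ b)) :
    ∀ y : ℕ → ℝ, (∀ i, 0 ≤ y i) →
      (∑ i ∈ Finset.range (n - 1), y i ^ c) ^ 2 ≥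
        (∑ i ∈ Finset.range (n - 1), y i) *
          (∑ i ∈ Finset.range (n - 1), y i ^ a * y ((i + 1) % (n - 1)) ^ b) := by
  intro y hy
  obtain ⟨m, rfl⟩ : ∃ m, n = m + 1 := ⟨n - 1, (Nat.succ_pred_eq_of_pos (by omega)).symm⟩
  have hm : 1 ≤ m := by omega
  simp only [Nat.add_sub_cancel]
  set S := ∑ i ∈ Finset.range m, y i ^ c with hSdef
  set B := ∑ i ∈ Finset.range m, y i with hBdef
  set Q := ∑ i ∈ Finset.range m, y i ^ a * y ((i + 1) % m) ^ b with hQdef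
  have hcpos : 0 < c := by rw [hc]; linarith
  -- apply hypothesis to the duplicated sequence
  have hx := h (fun i => y (i % m)) (fun i => hy _)
  have e1 : (∑ i ∈ Finset.range (m + 1), y (i % m) ^ c) = S + y 0 ^ c := by
    rw [Finset.sum_range_succ, Nat.mod_self, hSdef]
    congr 1
    exact Finset.sum_congr rfl fun i hi => by
      rw [Nat.mod_eq_of_lt (Finset.mem_range.mp hi)]
  have e2 : (∑ i ∈ Finset.range (m + 1), y (i % m)) = B + y 0 := by
    rw [Finset.sum_range_succ, Nat.mod_self, hBdef]
    congr 1
    exact Finset.sum_congr rfl fun i hi => by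
      rw [Nat.mod_eq_of_lt (Finset.mem_range.mp hi)]
  have e3 : (∑ i ∈ Finset.range (m + 1),
        y (i % m) ^ a * y ((i + 1) % (m + 1) % m) ^ b) = Q + y 0 ^ a * y 0 ^ b := by
    rw [Finset.sum_range_succ]
    simp only [Nat.mod_self, Nat.zero_mod]
    rw [hQdef]
    congr 1
    refine Finset.sum_congr rfl fun i hi => ?_
    have hi' := Finset.mem_range.mp hi
    rw [Nat.mod_eq_of_lt hi', Nat.mod_eq_of_lt (by omega : i + 1 < m + 1)]
  rw [e1, e2, e3] at hx
  -- key exponent identity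
  have hkey : (y 0 ^ c) ^ 2 = y 0 * (y 0 ^ a * y 0 ^ b) := by
    rcases eq_or_lt_of_le (hy 0) with h0 | h0
    · rw [← h0]
      simp [Real.zero_rpow hcpos.ne']
    · have l1 : y 0 ^ c * y 0 ^ c = y 0 ^ (c + c) := (Real.rpow_add h0 c c).symm
      have l2 : y 0 ^ a * y 0 ^ b = y 0 ^ (a + b) := (Real.rpow_add h0 a b).symm
      have l3 : y 0 ^ ((1 : ℝ) + (a + b)) = y 0 * y 0 ^ (a + b) := by
        rw [Real.rpow_add h0, Real.rpow_one]
      have l4 : y 0 ^ (c + c) = y 0 ^ ((1 : ℝ) + (a + b)) := by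
        congr 1
        rw [hc]; ring
      rw [sq, l1, l2, l4, l3]
  -- nonnegativity facts
  have hS : 0 ≤ S := Finset.sum_nonneg fun i _ => Real.rpow_nonneg (hy i) c
  have hB : 0 ≤ B := Finset.sum_nonneg fun i _ => hy i
  have hQ : 0 ≤ Q := Finset.sum_nonneg fun i _ =>
    mul_nonneg (Real.rpow_nonneg (hy i) a) (Real.rpow_nonneg (hy _) b)
  have ht : 0 ≤ y 0 := hy 0
  have hs : 0 ≤ y 0 ^ c := Real.rpow_nonneg ht c
  have hP : 0 ≤ y 0 ^ a * y 0 ^ b :=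
    mul_nonneg (Real.rpow_nonneg ht a) (Real.rpow_nonneg ht b)
  -- abbreviations
  set s := y 0 ^ c
  set t := y 0
  set P := t ^ a * t ^ b
  by_contra hlt
  push_neg at hlt
  have h1 : B * P + t * Q < 2 * S * s := by nlinarith [hx, hkey, hlt]
  have h2 : (B * P + t * Q) ^ 2 ≥ 4 * (B * Q) * s ^ 2 := by
    nlinarith [sq_nonneg (B * P - t * Q), hkey]
  have h3 : 0 ≤ B * P + t * Q := by positivity
  have h4 : 0 < 2 * S * s := lt_of_le_of_lt h3 h1
  have hspos : 0 < s := by nlinarith [h4, hS, hs]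
  have h5 : (B * P + t * Q) ^ 2 < (2 * S * s) ^ 2 := by nlinarith [h1, h3]
  nlinarith [h2, h5, pow_pos hspos 2, hlt]
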